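/- Assume 2k + 1 ≤ n and A satisfies the (2k+1)-RIP (δ_{2k+1} < 1). Then for every SEA trajectory and every t ≥ 0, ‖(x^t − x*)_{S^t}‖₂ ≤ (δ_{2k}/(1−δ_k)) · ‖u^t‖₂/η + (√(1+δ_k)/(1−δ_k)) · ‖e‖₂, where (z)_{S^t} denotes the restriction of z ∈ ℝⁿ to the coordinates in S^t. -/

import Mathlib

noncomputable section
open Finset Matrix

/-- Support of a vector as a finite set of indices. -/
def spt {d : ℕ} (x : Fin d → ℝ) : Finset (Fin d) :=
  Finset.univ.filter (fun i => x i ≠ 0)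

/-- Euclidean (ℓ²) norm of a vector. -/
def l2norm {d : ℕ} (v : Fin d → ℝ) : ℝ :=
  Real.sqrt (∑ i, (v i) ^ 2)

/-- Sup (ℓ∞) norm of a vector. -/
def supNorm {d : ℕ} (v : Fin d → ℝ) : ℝ :=
  ⨆ i, |v i|

/-- The `l`-th restricted isometry constant of `A`: the smallest `δ ≥ 0` such that
`(1-δ)‖x‖₂² ≤ ‖Ax‖₂² ≤ (1+δ)‖x‖₂²` for every `x` with at most `l` nonzero entries. -/
def ripConst {m n : ℕ} (A : Matrix (Fin m) (Fin n) ℝ) (l : ℕ) : ℝ :=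
  sInf {δ : ℝ | 0 ≤ δ ∧ ∀ x : Fin n → ℝ, (spt x).card ≤ l →
    (1 - δ) * ∑ i, (x i) ^ 2 ≤ ∑ j, (A.mulVec x j) ^ 2 ∧
    ∑ j, (A.mulVec x j) ^ 2 ≤ (1 + δ) * ∑ i, (x i) ^ 2}

/-- The oracle update direction `u^t` (for current support `S`):
`u_i = -η x*_i` for `i ∈ S* \ S` and `u_i = 0` otherwise. -/
def oracleUpd {n : ℕ} (xstar : Fin n → ℝ) (η : ℝ) (S : Finset (Fin n)) : Fin n → ℝ :=
  fun i => if xstar i ≠ 0 ∧ i ∉ S then -η * xstar i else 0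

/-- The gradient noise `b = u - η Aᵀ(A x - y)`. -/
def gradNoise {m n : ℕ} (A : Matrix (Fin m) (Fin n) ℝ) (y : Fin m → ℝ)
    (xstar : Fin n → ℝ) (η : ℝ) (S : Finset (Fin n)) (xt : Fin n → ℝ) : Fin n → ℝ :=
  oracleUpd xstar η S - η • (Aᵀ.mulVec (A.mulVec xt - y))

/-- A SEA trajectory with step size `η` and initialization `X0`. -/
structure SEATraj {m n : ℕ} (k : ℕ) (A : Matrix (Fin m) (Fin n) ℝ) (y : Fin m → ℝ)
    (η : ℝ) (X0 : Fin n → ℝ) where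
  S : ℕ → Finset (Fin n)
  x : ℕ → Fin n → ℝ
  X : ℕ → Fin n → ℝ
  X_init : X 0 = X0
  card_S : ∀ t, (S t).card = k
  sel : ∀ t, ∀ i ∈ S t, ∀ j, j ∉ S t → |X t j| ≤ |X t i|
  x_supp : ∀ t, ∀ i, i ∉ S t → x t i = 0
  x_min : ∀ t, ∀ z : Fin n → ℝ, (∀ i, i ∉ S t → z i = 0) →
    l2norm (A.mulVec (x t) - y) ≤ l2norm (A.mulVec z - y)
  X_upd : ∀ t, X (t + 1) = X t - η • (Aᵀ.mulVec (A.mulVec (x t) - y))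

/-! ### Auxiliary lemmas -/

def ripSet {m n : ℕ} (A : Matrix (Fin m) (Fin n) ℝ) (l : ℕ) : Set ℝ :=
  {δ : ℝ | 0 ≤ δ ∧ ∀ x : Fin n → ℝ, (spt x).card ≤ l →
    (1 - δ) * ∑ i, (x i) ^ 2 ≤ ∑ j, (A.mulVec x j) ^ 2 ∧
    ∑ j, (A.mulVec x j) ^ 2 ≤ (1 + δ) * ∑ i, (x i) ^ 2}

lemma ripConst_eq {m n : ℕ} (A : Matrix (Fin m) (Fin n) ℝ) (l : ℕ) :
    ripConst A l = sInf (ripSet A l) := rfl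

lemma ripSet_nonempty {m n : ℕ} (A : Matrix (Fin m) (Fin n) ℝ) (l : ℕ) :
    (ripSet A l).Nonempty := by
  refine ⟨max 1 (∑ j, ∑ i, (A j i)^2), le_trans zero_le_one (le_max_left _ _), ?_⟩
  intro x _
  have hAx : ∀ j, (A.mulVec x j)^2 ≤ (∑ i, (A j i)^2) * ∑ i, (x i)^2 := by
    intro j
    simpa [Matrix.mulVec, dotProduct] using
      Finset.sum_mul_sq_le_sq_mul_sq Finset.univ (fun i => A j i) x
  have h2 : (0:ℝ) ≤ ∑ i, (x i)^2 := Finset.sum_nonneg fun i _ => sq_nonneg _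
  have h3 : (0:ℝ) ≤ ∑ j, (A.mulVec x j)^2 := Finset.sum_nonneg fun j _ => sq_nonneg _
  have hmax1 := le_max_left (1:ℝ) (∑ j, ∑ i, (A j i)^2)
  have hmax2 := le_max_right (1:ℝ) (∑ j, ∑ i, (A j i)^2)
  constructor
  · nlinarith
  · calc ∑ j, (A.mulVec x j)^2 ≤ ∑ j, (∑ i, (A j i)^2) * ∑ i, (x i)^2 :=
        Finset.sum_le_sum fun j _ => hAx j
      _ = (∑ j, ∑ i, (A j i)^2) * ∑ i, (x i)^2 := by rw [← Finset.sum_mul]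
      _ ≤ (1 + max 1 (∑ j, ∑ i, (A j i)^2)) * ∑ i, (x i)^2 := by nlinarith

lemma ripSet_bddBelow {m n : ℕ} (A : Matrix (Fin m) (Fin n) ℝ) (l : ℕ) :
    BddBelow (ripSet A l) := ⟨0, fun δ hδ => hδ.1⟩

lemma ripConst_nonneg' {m n : ℕ} (A : Matrix (Fin m) (Fin n) ℝ) (l : ℕ) :
    0 ≤ ripConst A l := by
  rw [ripConst_eq]
  exact le_csInf (ripSet_nonempty A l) fun δ hδ => hδ.1

lemma ripConst_mono' {m n : ℕ} (A : Matrix (Fin m) (Fin n) ℝ) {l l' : ℕ} (h : l ≤ l') :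
    ripConst A l ≤ ripConst A l' := by
  rw [ripConst_eq, ripConst_eq]
  apply csInf_le_csInf (ripSet_bddBelow A l) (ripSet_nonempty A l')
  intro δ hδ
  exact ⟨hδ.1, fun x hx => hδ.2 x (hx.trans h)⟩

lemma ripConst_spec' {m n : ℕ} (A : Matrix (Fin m) (Fin n) ℝ) (l : ℕ)
    (x : Fin n → ℝ) (hx : (spt x).card ≤ l) :
    (1 - ripConst A l) * ∑ i, (x i) ^ 2 ≤ ∑ j, (A.mulVec x j) ^ 2 ∧
    ∑ j, (A.mulVec x j) ^ 2 ≤ (1 + ripConst A l) * ∑ i, (x i) ^ 2 := by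
  set s := ∑ i, (x i)^2 with hs
  have hs0 : 0 ≤ s := Finset.sum_nonneg fun i _ => sq_nonneg _
  have key : ∀ ε : ℝ, 0 < ε → ∃ δ ∈ ripSet A l, δ < ripConst A l + ε / (s + 1) := by
    intro ε hε
    rw [ripConst_eq]
    exact exists_lt_of_csInf_lt (ripSet_nonempty A l)
      (lt_add_of_pos_right _ (by positivity))
  constructor
  · refine le_of_forall_pos_le_add fun ε hε => ?_
    obtain ⟨δ, hδT, hδlt⟩ := key ε hε
    have h1 := (hδT.2 x hx).1
    have : ε / (s+1) * (s+1) = ε := by field_simp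
    nlinarith [mul_le_mul_of_nonneg_right (le_of_lt hδlt) hs0]
  · refine le_of_forall_pos_le_add fun ε hε => ?_
    obtain ⟨δ, hδT, hδlt⟩ := key ε hε
    have h1 := (hδT.2 x hx).2
    have : ε / (s+1) * (s+1) = ε := by field_simp
    nlinarith [mul_le_mul_of_nonneg_right (le_of_lt hδlt) hs0]

lemma spt_subset {d : ℕ} {v : Fin d → ℝ} {S : Finset (Fin d)}
    (h : ∀ i, i ∉ S → v i = 0) : spt v ⊆ S := by
  intro i hi
  simp only [spt, Finset.mem_filter] at hi
  by_contra hc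
  exact hi.2 (h i hc)

lemma spt_add_subset {d : ℕ} (v w : Fin d → ℝ) : spt (v + w) ⊆ spt v ∪ spt w := by
  intro i hi
  simp only [spt, Finset.mem_filter, Finset.mem_union, Finset.mem_univ, true_and,
    Pi.add_apply] at *
  by_contra hc
  push_neg at hc
  exact hi (by rw [hc.1, hc.2]; ring)

lemma spt_smul_subset {d : ℕ} (c : ℝ) (v : Fin d → ℝ) : spt (c • v) ⊆ spt v := by
  intro i hi
  simp only [spt, Finset.mem_filter, Finset.mem_univ, true_and, Pi.smul_apply,
    smul_eq_mul] at *
  intro h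
  exact hi (by rw [h]; ring)

/-- RIP cross-term bound for disjointly supported vectors. -/
lemma rip_cross {m n : ℕ} (A : Matrix (Fin m) (Fin n) ℝ) (l : ℕ) (v w : Fin n → ℝ)
    (hd : ∀ i, v i = 0 ∨ w i = 0)
    (hcard : (spt v).card + (spt w).card ≤ l) :
    ∑ j, (A.mulVec v j) * (A.mulVec w j) ≤
      ripConst A l * Real.sqrt (∑ i, (v i) ^ 2) * Real.sqrt (∑ i, (w i) ^ 2) := by
  set δ := ripConst A l with hδ
  set V := ∑ i, (v i)^2 with hV
  set W := ∑ i, (w i)^2 with hW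
  have hV0 : 0 ≤ V := Finset.sum_nonneg fun i _ => sq_nonneg _
  have hW0 : 0 ≤ W := Finset.sum_nonneg fun i _ => sq_nonneg _
  set sV := Real.sqrt V with hsV
  set sW := Real.sqrt W with hsW
  have hsV2 : sV^2 = V := Real.sq_sqrt hV0
  have hsW2 : sW^2 = W := Real.sq_sqrt hW0
  have hsV0 : 0 ≤ sV := Real.sqrt_nonneg _
  have hsW0 : 0 ≤ sW := Real.sqrt_nonneg _
  by_cases hz : sV * sW = 0
  · -- one of the vectors is zero
    have hvw0 : (∀ i, v i = 0) ∨ (∀ i, w i = 0) := by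
      rcases mul_eq_zero.mp hz with h | h
      · left
        have : V = 0 := by nlinarith [hsV2]
        intro i
        have := (Finset.sum_eq_zero_iff_of_nonneg
          (fun i _ => sq_nonneg (v i))).mp (hV ▸ this) i (Finset.mem_univ i)
        exact pow_eq_zero_iff (n := 2) (by norm_num) |>.mp this
      · right
        have : W = 0 := by nlinarith [hsW2]
        intro i
        have := (Finset.sum_eq_zero_iff_of_nonneg
          (fun i _ => sq_nonneg (w i))).mp (hW ▸ this) i (Finset.mem_univ i)
        exact pow_eq_zero_iff (n := 2) (by norm_num) |>.mp this
    have : ∑ j, (A.mulVec v j) * (A.mulVec w j) = 0 := by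
      rcases hvw0 with h | h
      · have : A.mulVec v = 0 := by
          have : v = 0 := funext h
          rw [this, Matrix.mulVec_zero]
        simp [this]
      · have : A.mulVec w = 0 := by
          have : w = 0 := funext h
          rw [this, Matrix.mulVec_zero]
        simp [this]
    rw [this, mul_assoc, hz, mul_zero]
  · have hsVpos : 0 < sV := lt_of_le_of_ne hsV0 (fun h => hz (by rw [← h]; ring))
    have hsWpos : 0 < sW := by
      rcases lt_or_eq_of_le hsW0 with h | h
      · exact h
      · exact absurd (by rw [← h]; ring) hz
    set p := sW • v + sV • w with hp
    set q := sW • v + (-sV) • w with hq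
    have hpcard : (spt p).card ≤ l := by
      have h1 : spt p ⊆ spt v ∪ spt w :=
        (spt_add_subset _ _).trans
          (Finset.union_subset_union (spt_smul_subset _ _) (spt_smul_subset _ _))
      calc (spt p).card ≤ (spt v ∪ spt w).card := Finset.card_le_card h1
        _ ≤ (spt v).card + (spt w).card := Finset.card_union_le _ _
        _ ≤ l := hcard
    have hqcard : (spt q).card ≤ l := by
      have h1 : spt q ⊆ spt v ∪ spt w :=
        (spt_add_subset _ _).trans
          (Finset.union_subset_union (spt_smul_subset _ _) (spt_smul_subset _ _))
      calc (spt q).card ≤ (spt v ∪ spt w).card := Finset.card_le_card h1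
        _ ≤ (spt v).card + (spt w).card := Finset.card_union_le _ _
        _ ≤ l := hcard
    have hvw : ∑ i, v i * w i = 0 :=
      Finset.sum_eq_zero fun i _ => by rcases hd i with h | h <;> simp [h]
    have hpsum : ∑ i, (p i)^2 = 2 * (V * W) := by
      have : ∀ i, (p i)^2 = W * (v i)^2 + V * (w i)^2 + (2 * sV * sW) * (v i * w i) := by
        intro i
        simp only [hp, Pi.add_apply, Pi.smul_apply, smul_eq_mul]
        rw [← hsV2, ← hsW2]; ring
      rw [Finset.sum_congr rfl fun i _ => this i]
      rw [Finset.sum_add_distrib, Finset.sum_add_distrib, ← Finset.mul_sum, ← Finset.mul_sum,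
        ← Finset.mul_sum, hvw]
      ring
    have hqsum : ∑ i, (q i)^2 = 2 * (V * W) := by
      have : ∀ i, (q i)^2 = W * (v i)^2 + V * (w i)^2 - (2 * sV * sW) * (v i * w i) := by
        intro i
        simp only [hq, Pi.add_apply, Pi.smul_apply, smul_eq_mul]
        rw [← hsV2, ← hsW2]; ring
      rw [Finset.sum_congr rfl fun i _ => this i]
      rw [Finset.sum_sub_distrib, Finset.sum_add_distrib, ← Finset.mul_sum, ← Finset.mul_sum,
        ← Finset.mul_sum, hvw]
      ring
    have hAp : ∀ j, A.mulVec p j = sW * A.mulVec v j + sV * A.mulVec w j := by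
      intro j
      rw [hp, Matrix.mulVec_add, Matrix.mulVec_smul, Matrix.mulVec_smul]
      simp
    have hAq : ∀ j, A.mulVec q j = sW * A.mulVec v j - sV * A.mulVec w j := by
      intro j
      rw [hq, Matrix.mulVec_add, Matrix.mulVec_smul, Matrix.mulVec_smul]
      simp; ring
    have hApsum : ∑ j, (A.mulVec p j)^2 =
        W * ∑ j, (A.mulVec v j)^2 + V * ∑ j, (A.mulVec w j)^2
          + (2 * sV * sW) * ∑ j, (A.mulVec v j) * (A.mulVec w j) := by
      rw [Finset.mul_sum, Finset.mul_sum, Finset.mul_sum, ← Finset.sum_add_distrib,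
        ← Finset.sum_add_distrib]
      refine Finset.sum_congr rfl fun j _ => ?_
      rw [hAp j, ← hsV2, ← hsW2]; ring
    have hAqsum : ∑ j, (A.mulVec q j)^2 =
        W * ∑ j, (A.mulVec v j)^2 + V * ∑ j, (A.mulVec w j)^2
          - (2 * sV * sW) * ∑ j, (A.mulVec v j) * (A.mulVec w j) := by
      rw [Finset.mul_sum, Finset.mul_sum, Finset.mul_sum, ← Finset.sum_add_distrib,
        ← Finset.sum_sub_distrib]
      refine Finset.sum_congr rfl fun j _ => ?_
      rw [hAq j, ← hsV2, ← hsW2]; ring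
    have h1 := (ripConst_spec' A l p hpcard).2
    have h2 := (ripConst_spec' A l q hqcard).1
    rw [hpsum] at h1
    rw [hqsum] at h2
    have hkey : 4 * sV * sW * (∑ j, (A.mulVec v j) * (A.mulVec w j)) ≤
        4 * δ * (sV^2 * sW^2) := by
      rw [hsV2, hsW2]
      nlinarith [hApsum, hAqsum]
    have hpos : 0 < sV * sW := mul_pos hsVpos hsWpos
    nlinarith [hkey, hpos]

/-- Least-squares orthogonality: the residual is orthogonal to `A z` for `z` supported in `S`. -/
lemma ls_orth {m n : ℕ} (A : Matrix (Fin m) (Fin n) ℝ) (y : Fin m → ℝ)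
    (S : Finset (Fin n)) (x : Fin n → ℝ) (hx : ∀ i, i ∉ S → x i = 0)
    (hmin : ∀ z : Fin n → ℝ, (∀ i, i ∉ S → z i = 0) →
      ∑ j, (A.mulVec x j - y j)^2 ≤ ∑ j, (A.mulVec z j - y j)^2)
    (z : Fin n → ℝ) (hz : ∀ i, i ∉ S → z i = 0) :
    ∑ j, (A.mulVec z j) * (A.mulVec x j - y j) = 0 := by
  set c := ∑ j, (A.mulVec z j) * (A.mulVec x j - y j) with hc
  set Q := ∑ j, (A.mulVec z j)^2 with hQ
  have hQ0 : 0 ≤ Q := Finset.sum_nonneg fun j _ => sq_nonneg _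
  have key : ∀ s : ℝ, 0 ≤ 2 * s * c + s^2 * Q := by
    intro s
    have hsupp : ∀ i, i ∉ S → (x + s • z) i = 0 := by
      intro i hi
      simp [hx i hi, hz i hi]
    have h := hmin (x + s • z) hsupp
    have hexp : ∑ j, (A.mulVec (x + s • z) j - y j)^2 =
        ∑ j, (A.mulVec x j - y j)^2 + (2 * s * c + s^2 * Q) := by
      rw [hc, hQ, Finset.mul_sum, Finset.mul_sum, ← Finset.sum_add_distrib,
        ← Finset.sum_add_distrib]
      refine Finset.sum_congr rfl fun j _ => ?_
      rw [Matrix.mulVec_add, Matrix.mulVec_smul]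
      simp only [Pi.add_apply, Pi.smul_apply, smul_eq_mul]
      ring
    rw [hexp] at h
    linarith
  have h1 := key (-c / (Q + 1))
  have hQ1 : (0:ℝ) < Q + 1 := by linarith
  have h2 : 2 * (-c / (Q+1)) * c + (-c / (Q+1))^2 * Q =
      (-2 * c^2 * (Q+1) + c^2 * Q) / (Q+1)^2 := by
    field_simp
  rw [h2] at h1
  have hb : (0:ℝ) < (Q+1)^2 := by positivity
  rw [le_div_iff₀ hb] at h1
  have hc2 : c^2 ≤ 0 := by nlinarith
  have : c^2 = 0 := le_antisymm hc2 (sq_nonneg c)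
  exact pow_eq_zero_iff (n := 2) (by norm_num) |>.mp this

/-- Approximation error bound on the current support under the `(2k+1)`-RIP. -/
theorem sea_approximation_error_RIP {m n k : ℕ} (hm : 0 < m) (hk : 0 < k)
    (hkn : 2 * k + 1 ≤ n)
    (A : Matrix (Fin m) (Fin n) ℝ) (hRIP : ripConst A (2 * k + 1) < 1)
    (xstar : Fin n → ℝ) (hspars : (spt xstar).card ≤ k) (hne : (spt xstar).Nonempty)
    (e : Fin m → ℝ) (y : Fin m → ℝ) (hy : y = A.mulVec xstar + e)
    (η : ℝ) (hη : 0 < η) (X0 : Fin n → ℝ)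
    (traj : SEATraj k A y η X0) :
    ∀ t : ℕ,
      Real.sqrt (∑ i ∈ traj.S t, (traj.x t i - xstar i) ^ 2) ≤
        (ripConst A (2 * k) / (1 - ripConst A k)) *
            l2norm (oracleUpd xstar η (traj.S t)) / η +
          (Real.sqrt (1 + ripConst A k) / (1 - ripConst A k)) * l2norm e := by
  intro t
  set S := traj.S t with hS
  set x := traj.x t with hx
  set δk := ripConst A k with hδk
  set δ2k := ripConst A (2 * k) with hδ2k
  have hδk0 : 0 ≤ δk := ripConst_nonneg' A k
  have hδ2k0 : 0 ≤ δ2k := ripConst_nonneg' A (2 * k)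
  have hδk1 : δk < 1 := lt_of_le_of_lt (ripConst_mono' A (by omega)) hRIP
  have hδ2k1 : δ2k < 1 := lt_of_le_of_lt (ripConst_mono' A (by omega)) hRIP
  have hd1 : (0:ℝ) < 1 - δk := by linarith
  -- the two disjointly supported pieces
  set v : Fin n → ℝ := fun i => if i ∈ S then x i - xstar i else 0 with hv
  set w : Fin n → ℝ := fun i => if i ∈ S then 0 else xstar i with hw
  have hvS : ∀ i, i ∉ S → v i = 0 := fun i hi => by simp [hv, hi]
  have hvcard : (spt v).card ≤ k := by
    have := Finset.card_le_card (spt_subset hvS)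
    rwa [traj.card_S t] at this
  have hwcard : (spt w).card ≤ k := by
    refine le_trans (Finset.card_le_card ?_) hspars
    intro i hi
    simp only [spt, Finset.mem_filter, Finset.mem_univ, true_and, hw] at *
    intro h
    by_cases h1 : i ∈ S
    · exact hi (by simp [h1])
    · exact hi (by simp [h1, h])
  have hdisj : ∀ i, v i = 0 ∨ w i = 0 := by
    intro i
    by_cases h : i ∈ S
    · right; simp [hw, h]
    · left; simp [hv, h]
  -- the residual decomposition
  have hvwx : v - w = x - xstar := by
    funext i
    by_cases h : i ∈ S
    · simp [hv, hw, h]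
    · have hx0 : x i = 0 := traj.x_supp t i h
      simp [hv, hw, h, hx0]
  have hres : ∀ j, A.mulVec x j - y j = A.mulVec v j - A.mulVec w j - e j := by
    intro j
    have h1 := congrFun (congrArg A.mulVec hvwx) j
    rw [Matrix.mulVec_sub, Matrix.mulVec_sub] at h1
    simp only [Pi.sub_apply] at h1
    rw [hy]
    simp only [Pi.add_apply]
    linarith
  -- least squares orthogonality for v
  have hmin : ∀ z : Fin n → ℝ, (∀ i, i ∉ S → z i = 0) →
      ∑ j, (A.mulVec x j - y j)^2 ≤ ∑ j, (A.mulVec z j - y j)^2 := by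
    intro z hz
    have h := traj.x_min t z hz
    unfold l2norm at h
    have h2 := (Real.sqrt_le_sqrt_iff
      (Finset.sum_nonneg fun j _ => sq_nonneg ((A.mulVec z - y) j))).mp h
    simpa [Pi.sub_apply] using h2
  have horthv := ls_orth A y S x (traj.x_supp t) hmin v hvS
  -- split the energy
  have hsplit : ∑ j, (A.mulVec v j)^2 =
      (∑ j, A.mulVec v j * A.mulVec w j) + ∑ j, A.mulVec v j * e j := by
    have h0 : ∑ j, (A.mulVec v j) * (A.mulVec v j - A.mulVec w j - e j) = 0 := by
      rw [← horthv]
      exact Finset.sum_congr rfl fun j _ => by rw [hres j]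
    have h1 : ∑ j, ((A.mulVec v j)^2 - A.mulVec v j * A.mulVec w j - A.mulVec v j * e j)
        = 0 := by
      rw [← h0]
      exact Finset.sum_congr rfl fun j _ => by ring
    rw [Finset.sum_sub_distrib, Finset.sum_sub_distrib] at h1
    linarith
  set V := ∑ i, (v i)^2 with hV
  set W := ∑ i, (w i)^2 with hW
  set E := ∑ j, (e j)^2 with hE
  have hV0 : 0 ≤ V := Finset.sum_nonneg fun i _ => sq_nonneg _
  have hW0 : 0 ≤ W := Finset.sum_nonneg fun i _ => sq_nonneg _
  have hE0 : 0 ≤ E := Finset.sum_nonneg fun j _ => sq_nonneg _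
  set N := Real.sqrt V with hN
  set Ww := Real.sqrt W with hWw
  set Ee := Real.sqrt E with hEe
  have hN0 : 0 ≤ N := Real.sqrt_nonneg _
  have hWw0 : 0 ≤ Ww := Real.sqrt_nonneg _
  have hEe0 : 0 ≤ Ee := Real.sqrt_nonneg _
  have hN2 : N^2 = V := Real.sq_sqrt hV0
  -- lower RIP bound
  have hlow := (ripConst_spec' A k v hvcard).1
  have hupp := (ripConst_spec' A k v hvcard).2
  -- cross term
  have hcross := rip_cross A (2 * k) v w hdisj (by omega)
  -- Cauchy-Schwarz for the noise term
  have hAv0 : (0:ℝ) ≤ ∑ j, (A.mulVec v j)^2 := Finset.sum_nonneg fun j _ => sq_nonneg _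
  have hcs : ∑ j, A.mulVec v j * e j ≤ Real.sqrt (1 + δk) * N * Ee := by
    have h := Finset.sum_mul_sq_le_sq_mul_sq Finset.univ (fun j => A.mulVec v j) e
    have h1 : ∑ j, A.mulVec v j * e j ≤
        Real.sqrt (∑ j, (A.mulVec v j)^2) * Ee := by
      calc ∑ j, A.mulVec v j * e j ≤ |∑ j, A.mulVec v j * e j| := le_abs_self _
        _ = Real.sqrt ((∑ j, A.mulVec v j * e j)^2) := (Real.sqrt_sq_eq_abs _).symm
        _ ≤ Real.sqrt ((∑ j, (A.mulVec v j)^2) * E) := Real.sqrt_le_sqrt (by exact h)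
        _ = Real.sqrt (∑ j, (A.mulVec v j)^2) * Ee := Real.sqrt_mul hAv0 E
    have h2 : Real.sqrt (∑ j, (A.mulVec v j)^2) ≤ Real.sqrt (1 + δk) * N := by
      calc Real.sqrt (∑ j, (A.mulVec v j)^2) ≤ Real.sqrt ((1 + δk) * V) :=
          Real.sqrt_le_sqrt hupp
        _ = Real.sqrt (1 + δk) * N := Real.sqrt_mul (by linarith) V
    calc ∑ j, A.mulVec v j * e j ≤ Real.sqrt (∑ j, (A.mulVec v j)^2) * Ee := h1
      _ ≤ Real.sqrt (1 + δk) * N * Ee := mul_le_mul_of_nonneg_right h2 hEe0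
  -- main inequality
  have hmain : (1 - δk) * N^2 ≤ δ2k * N * Ww + Real.sqrt (1 + δk) * N * Ee := by
    rw [hN2]
    calc (1 - δk) * V ≤ ∑ j, (A.mulVec v j)^2 := hlow
      _ = (∑ j, A.mulVec v j * A.mulVec w j) + ∑ j, A.mulVec v j * e j := hsplit
      _ ≤ δ2k * N * Ww + Real.sqrt (1 + δk) * N * Ee := by
          have := hcross
          rw [← hV, ← hW, ← hN, ← hWw] at this
          linarith [hcs]
  -- identify the goal's LHS with N
  have hgoalL : ∑ i ∈ S, (x i - xstar i)^2 = V := by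
    rw [hV]
    symm
    calc ∑ i, (v i)^2 = ∑ i, (if i ∈ S then (x i - xstar i)^2 else 0) :=
        Finset.sum_congr rfl fun i _ => by by_cases h : i ∈ S <;> simp [hv, h]
      _ = ∑ i ∈ S, (x i - xstar i)^2 := by rw [Finset.sum_ite_mem, Finset.univ_inter]
  -- identify l2norm of the oracle update
  have hu : l2norm (oracleUpd xstar η S) = η * Ww := by
    unfold l2norm
    have h1 : ∑ i, (oracleUpd xstar η S i)^2 = η^2 * W := by
      rw [hW, Finset.mul_sum]
      refine Finset.sum_congr rfl fun i _ => ?_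
      unfold oracleUpd
      by_cases h1 : i ∈ S <;> by_cases h2 : xstar i = 0 <;> simp [hw, h1, h2] <;> ring
    rw [h1, Real.sqrt_mul (sq_nonneg η), Real.sqrt_sq hη.le]
  -- identify l2norm e
  have he : l2norm e = Ee := rfl
  rw [hgoalL, hu, he, ← hN]
  have hη' : η ≠ 0 := ne_of_gt hη
  have hrw : δ2k / (1 - δk) * (η * Ww) / η + Real.sqrt (1 + δk) / (1 - δk) * Ee =
      (δ2k * Ww + Real.sqrt (1 + δk) * Ee) / (1 - δk) := by
    field_simp
  rw [hrw, le_div_iff₀ hd1]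
  have hsq0 : 0 ≤ Real.sqrt (1 + δk) := Real.sqrt_nonneg _
  rcases eq_or_lt_of_le hN0 with h | h
  · rw [← h]
    simp only [zero_mul]
    positivity
  · have h3 : ((1 - δk) * N) * N ≤ (δ2k * Ww + Real.sqrt (1 + δk) * Ee) * N := by
      calc ((1 - δk) * N) * N = (1 - δk) * N ^ 2 := by ring
        _ ≤ δ2k * N * Ww + Real.sqrt (1 + δk) * N * Ee := hmain
        _ = (δ2k * Ww + Real.sqrt (1 + δk) * Ee) * N := by ring
    have h4 := (mul_le_mul_iff_of_pos_right h).mp h3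
    rw [mul_comm]
    exact h4

end
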